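/- Let p be a prime and n ≥ 1. In the ring W(ℤ/p^n) of p-typical Witt vectors of ℤ/p^n, one has p^n = V(p^{n−1}), where p^n and p^{n−1} denote the images of these integers under the unique ring map ℤ → W(ℤ/p^n). Consequently, for n ≥ 2 one also has p^n = V(F(V(p^{n−2}))) in W(ℤ/p^n); in particular p^n lies in the image of V∘F. -/

import Mathlib

open WittVector Finset

section aux
variable (p : ℕ) [hp : Fact p.Prime]

/-- Ghost components pin down `p^n - V(p^(n-1))` over `ℤ`; all its coefficients
are divisible by `p^n`. -/
lemma stmt4_dvd_coeff (n : ℕ) (hn : 1 ≤ n) (k : ℕ) :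
    (p : ℤ) ^ n ∣ (((p ^ n : ℕ) : WittVector p ℤ) -
      verschiebung ((p ^ (n - 1) : ℕ) : WittVector p ℤ)).coeff k := by
  set d : WittVector p ℤ := ((p ^ n : ℕ) : WittVector p ℤ) -
      verschiebung ((p ^ (n - 1) : ℕ) : WittVector p ℤ) with hd
  have hghost : ∀ k : ℕ, ghostComponent k d = if k = 0 then (p : ℤ) ^ n else 0 := by
    intro k
    rw [hd, map_sub, map_natCast]
    cases k with
    | zero => simp [ghostComponent_zero_verschiebung]
    | succ j =>
        rw [ghostComponent_verschiebung, map_natCast]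
        push_cast
        rw [← pow_succ']
        have : n - 1 + 1 = n := Nat.succ_pred_eq_of_pos hn
        simp [this]
  have hsum : ∀ k : ℕ, ghostComponent k d =
      ∑ i ∈ range (k + 1), (p : ℤ) ^ i * d.coeff i ^ p ^ (k - i) := by
    intro k
    rw [ghostComponent_apply, aeval_wittPolynomial]
  induction k using Nat.strong_induction_on with
  | _ k ih =>
    have key := (hsum k).symm.trans (hghost k)
    rw [Finset.sum_range_succ] at key
    simp only [Nat.sub_self, pow_zero, pow_one] at key
    have hterms : (p : ℤ) ^ (n + k) ∣ ∑ i ∈ range k, (p : ℤ) ^ i * d.coeff i ^ p ^ (k - i) := by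
      refine Finset.dvd_sum fun i hi => ?_
      rw [Finset.mem_range] at hi
      have hm : k - i + 1 ≤ p ^ (k - i) :=
        Nat.succ_le_of_lt (Nat.lt_pow_self hp.out.one_lt)
      have h1 : ((p : ℤ) ^ n) ^ p ^ (k - i) ∣ d.coeff i ^ p ^ (k - i) :=
        pow_dvd_pow_of_dvd (ih i hi) _
      rw [← pow_mul] at h1
      have hle : n + k ≤ i + n * p ^ (k - i) := by
        have hik : i + (k - i) = k := Nat.add_sub_cancel' hi.le
        calc n + k = n + i + (k - i) := by omega
          _ ≤ i + n * (k - i + 1) := by nlinarith [Nat.one_le_iff_ne_zero.mp hn]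
          _ ≤ i + n * p ^ (k - i) := by
              exact Nat.add_le_add_left (Nat.mul_le_mul_left n hm) i
      calc (p : ℤ) ^ (n + k) ∣ (p : ℤ) ^ (i + n * p ^ (k - i)) := pow_dvd_pow _ hle
        _ = (p : ℤ) ^ i * (p : ℤ) ^ (n * p ^ (k - i)) := pow_add _ _ _
        _ ∣ (p : ℤ) ^ i * d.coeff i ^ p ^ (k - i) := mul_dvd_mul_left _ h1
    have hpk : (p : ℤ) ^ (n + k) ∣ (p : ℤ) ^ k * d.coeff k := by
      have : (p : ℤ) ^ k * d.coeff k = (if k = 0 then (p : ℤ) ^ n else 0)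
          - ∑ i ∈ range k, (p : ℤ) ^ i * d.coeff i ^ p ^ (k - i) := by linarith [key]
      rw [this]
      refine dvd_sub ?_ hterms
      split_ifs with h
      · subst h; simp
      · exact dvd_zero _
    have hp0 : (p : ℤ) ^ k ≠ 0 := pow_ne_zero _ (by exact_mod_cast hp.out.ne_zero)
    rw [add_comm n k, pow_add] at hpk
    exact (mul_dvd_mul_iff_left hp0).mp hpk

end aux

theorem stmt4 (p : ℕ) [Fact p.Prime] (n : ℕ) (hn : 1 ≤ n) :
    ((p ^ n : ℕ) : WittVector p (ZMod (p ^ n))) =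
      verschiebung ((p ^ (n - 1) : ℕ) : WittVector p (ZMod (p ^ n))) ∧
    (2 ≤ n →
      ((p ^ n : ℕ) : WittVector p (ZMod (p ^ n))) =
        verschiebung (frobenius (verschiebung
          ((p ^ (n - 2) : ℕ) : WittVector p (ZMod (p ^ n))))) ∧
      ∃ z : WittVector p (ZMod (p ^ n)),
        verschiebung (frobenius z) = ((p ^ n : ℕ) : WittVector p (ZMod (p ^ n)))) := by
  have main : ((p ^ n : ℕ) : WittVector p (ZMod (p ^ n))) =
      verschiebung ((p ^ (n - 1) : ℕ) : WittVector p (ZMod (p ^ n))) := by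
    have h0 : WittVector.map (Int.castRingHom (ZMod (p ^ n)))
        (((p ^ n : ℕ) : WittVector p ℤ) - verschiebung ((p ^ (n - 1) : ℕ) : WittVector p ℤ))
        = 0 := by
      apply WittVector.ext
      intro k
      rw [map_coeff]
      have := stmt4_dvd_coeff p n hn k
      simp only [zero_coeff, Int.coe_castRingHom]
      rw [ZMod.intCast_zmod_eq_zero_iff_dvd]
      exact_mod_cast this
    rw [map_sub, map_natCast, map_verschiebung, map_natCast] at h0
    exact sub_eq_zero.mp h0
  refine ⟨main, fun h2 => ?_⟩
  have key : frobenius (verschiebung ((p ^ (n - 2) : ℕ) : WittVector p (ZMod (p ^ n))))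
      = ((p ^ (n - 1) : ℕ) : WittVector p (ZMod (p ^ n))) := by
    rw [frobenius_verschiebung]
    have : p ^ (n - 1) = p ^ (n - 2) * p := by
      rw [← pow_succ]; congr 1; omega
    rw [this]
    push_cast
    ring
  exact ⟨by rw [key, main], ⟨verschiebung ((p ^ (n - 2) : ℕ) : _), by rw [key, main]⟩⟩
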